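/- Assume complete vertical transmission v_w = 1 (so v_u = 0), R_0 = sqrt((φ_w/μ_fw)(μ_fu/φ_u)) < 1, and R_0w = b_f ψ φ_w/((μ_a+ψ)μ_fw) > 1. Set k = (μ_mw/μ_mu)(R_0⁻² − 1) and A_u* = K_a(1 − 1/R_0w)/(1+k). Then the point (A_u*, A_w* = k A_u*, F_u* = b_f ψ A_u*/μ_fu, F_w* = b_f ψ A_w*/μ_fw, M_u* = b_m ψ A_u*/μ_mu, M_w* = b_m ψ A_w*/μ_mw) has all six components strictly positive and is an equilibrium of the Wolbachia mosquito model. -/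

import Mathlib

/-- The Wolbachia mosquito model vector field on states
`x = (A_u, A_w, F_u, F_w, M_u, M_w)` (indices 0..5). -/
noncomputable def wolbField (bf vw φu φw ψ μa μfu μfw μmu μmw Ka : ℝ)
    (x : Fin 6 → ℝ) : Fin 6 → ℝ :=
  ![ φu * x 2 * (x 4 / (x 4 + x 5)) * (1 - (x 0 + x 1) / Ka)
      + (1 - vw) * (φw * x 3 * (x 4 / (x 4 + x 5)) * (1 - (x 0 + x 1) / Ka)
          + φw * x 3 * (1 - x 4 / (x 4 + x 5)) * (1 - (x 0 + x 1) / Ka))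
      - (μa + ψ) * x 0,
    vw * (φw * x 3 * (x 4 / (x 4 + x 5)) * (1 - (x 0 + x 1) / Ka)
          + φw * x 3 * (1 - x 4 / (x 4 + x 5)) * (1 - (x 0 + x 1) / Ka))
      - (μa + ψ) * x 1,
    bf * ψ * x 0 - μfu * x 2,
    bf * ψ * x 1 - μfw * x 3,
    (1 - bf) * ψ * x 0 - μmu * x 4,
    (1 - bf) * ψ * x 1 - μmw * x 5 ]

/-- under complete vertical transmission (`v_w = 1`), `R₀ < 1` and
`R₀w > 1`, the endemic point with ratio `k = (μ_mw/μ_mu)(R₀⁻² − 1)` is a strictly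
positive equilibrium of the Wolbachia mosquito model. -/
theorem endemic_equilibrium_exists_complete_transmission
    (bf φu φw ψ μa μfu μfw μmu μmw Ka : ℝ)
    (hbf : 0 < bf) (hbf1 : bf < 1)
    (hφu : 0 < φu) (hφw : 0 < φw) (hψ : 0 < ψ) (hμa : 0 < μa)
    (hμfu : 0 < μfu) (hμfw : 0 < μfw) (hμmu : 0 < μmu) (hμmw : 0 < μmw)
    (hKa : 0 < Ka)
    (R0 : ℝ) (hR0 : R0 = Real.sqrt ((φw / μfw) * (μfu / φu))) (hR0lt : R0 < 1)
    (hR0w : 1 < bf * ψ * φw / ((μa + ψ) * μfw))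
    (k : ℝ) (hk : k = (μmw / μmu) * (1 / R0 ^ 2 - 1))
    (Au : ℝ) (hAu : Au = Ka * (1 - 1 / (bf * ψ * φw / ((μa + ψ) * μfw))) / (1 + k))
    (x : Fin 6 → ℝ)
    (hx : x = ![Au, k * Au, bf * ψ * Au / μfu, bf * ψ * (k * Au) / μfw,
      (1 - bf) * ψ * Au / μmu, (1 - bf) * ψ * (k * Au) / μmw]) :
    (∀ i, 0 < x i) ∧
    wolbField bf 1 φu φw ψ μa μfu μfw μmu μmw Ka x = 0 := by
  have hbf' : 0 < 1 - bf := by linarith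
  have hμaψ : 0 < μa + ψ := by linarith
  have hR0pos : 0 < R0 := by
    rw [hR0]; exact Real.sqrt_pos.mpr (by positivity)
  have hR0sq : R0 ^ 2 = (φw / μfw) * (μfu / φu) := by
    rw [hR0, sq]; exact Real.mul_self_sqrt (by positivity)
  have hR0sq1 : R0 ^ 2 < 1 := by nlinarith
  have hR0sqpos : 0 < R0 ^ 2 := by positivity
  have hkpos : 0 < k := by
    have h1 : 1 < 1 / R0 ^ 2 := by rw [lt_div_iff₀ hR0sqpos]; linarith
    have h2 : 0 < 1 / R0 ^ 2 - 1 := by linarith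
    rw [hk]; positivity
  have hAupos : 0 < Au := by
    have hRw : 0 < bf * ψ * φw / ((μa + ψ) * μfw) := by positivity
    have h1 : 1 / (bf * ψ * φw / ((μa + ψ) * μfw)) < 1 := by
      rw [div_lt_one hRw]; exact hR0w
    have h2 : 0 < 1 - 1 / (bf * ψ * φw / ((μa + ψ) * μfw)) := by linarith
    rw [hAu]; positivity
  have hx0 : x 0 = Au := by rw [hx]; rfl
  have hx1 : x 1 = k * Au := by rw [hx]; rfl
  have hx2 : x 2 = bf * ψ * Au / μfu := by rw [hx]; rfl
  have hx3 : x 3 = bf * ψ * (k * Au) / μfw := by rw [hx]; rfl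
  have hx4 : x 4 = (1 - bf) * ψ * Au / μmu := by rw [hx]; rfl
  have hx5 : x 5 = (1 - bf) * ψ * (k * Au) / μmw := by rw [hx]; rfl
  have hpos : ∀ i, 0 < x i := by
    intro i; fin_cases i
    · show 0 < x 0; rw [hx0]; positivity
    · show 0 < x 1; rw [hx1]; positivity
    · show 0 < x 2; rw [hx2]; positivity
    · show 0 < x 3; rw [hx3]; positivity
    · show 0 < x 4; rw [hx4]; positivity
    · show 0 < x 5; rw [hx5]; positivity
  have hc : (1:ℝ) / R0 ^ 2 = μfw * φu / (φw * μfu) := by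
    rw [hR0sq]; field_simp
  have hsum : x 4 + x 5 = (1 - bf) * ψ * Au * (μfw * φu) / (μmu * (φw * μfu)) := by
    rw [hx4, hx5, hk, hc]
    field_simp
    ring
  have hm : x 4 / (x 4 + x 5) = φw * μfu / (μfw * φu) := by
    rw [hsum, hx4]
    rw [div_div_div_eq]
    rw [div_eq_div_iff (by positivity) (by positivity)]
    ring
  have h1k : (0 : ℝ) < 1 + k := by positivity
  have hN : 1 - (x 0 + x 1) / Ka = (μa + ψ) * μfw / (bf * ψ * φw) := by
    have h1k' : (1 : ℝ) + k ≠ 0 := ne_of_gt h1k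
    rw [hx0, hx1, hAu]
    field_simp
    ring
  have e0 : φu * x 2 * (x 4 / (x 4 + x 5)) * (1 - (x 0 + x 1) / Ka)
      + (1 - (1:ℝ)) * (φw * x 3 * (x 4 / (x 4 + x 5)) * (1 - (x 0 + x 1) / Ka)
          + φw * x 3 * (1 - x 4 / (x 4 + x 5)) * (1 - (x 0 + x 1) / Ka))
      - (μa + ψ) * x 0 = 0 := by
    rw [hm, hN, hx0, hx2]
    field_simp
    ring
  have e1 : (1:ℝ) * (φw * x 3 * (x 4 / (x 4 + x 5)) * (1 - (x 0 + x 1) / Ka)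
          + φw * x 3 * (1 - x 4 / (x 4 + x 5)) * (1 - (x 0 + x 1) / Ka))
      - (μa + ψ) * x 1 = 0 := by
    rw [hm, hN, hx1, hx3]
    field_simp
    ring
  have e2 : bf * ψ * x 0 - μfu * x 2 = 0 := by
    rw [hx0, hx2]; field_simp; ring
  have e3 : bf * ψ * x 1 - μfw * x 3 = 0 := by
    rw [hx1, hx3]; field_simp; ring
  have e4 : (1 - bf) * ψ * x 0 - μmu * x 4 = 0 := by
    rw [hx0, hx4]; field_simp; ring
  have e5 : (1 - bf) * ψ * x 1 - μmw * x 5 = 0 := by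
    rw [hx1, hx5]; field_simp; ring
  refine ⟨hpos, ?_⟩
  funext i
  fin_cases i
  · exact e0
  · exact e1
  · exact e2
  · exact e3
  · exact e4
  · exact e5
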